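/- Let X and Y be finite nonempty sets and let f, f' : X → Y. Then tr(ρ_f · ρ_{f'}) = (1/|X|²) · Σ_{(y,y') ∈ Y × Y} |L_f(y) ∩ L_{f'}(y')|². -/

import Mathlib

open Matrix BigOperators
open scoped ComplexOrder

/-- The positive semidefinite square root of a matrix (zero if the matrix is
not positive semidefinite). -/
noncomputable def msqrt {n : Type*} [Fintype n] [DecidableEq n]
    (A : Matrix n n ℂ) : Matrix n n ℂ :=
  letI := Classical.dec A.PosSemidef
  if h : A.PosSemidef then
    (h.1.eigenvectorUnitary : Matrix n n ℂ) * diagonal ((↑) ∘ (√·) ∘ h.1.eigenvalues) *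
      (star (h.1.eigenvectorUnitary : Matrix n n ℂ)) else 0

/-- The fidelity `F(ρ,σ) = tr √(√ρ σ √ρ)` of two (positive semidefinite) matrices. -/
noncomputable def fidelity {n : Type*} [Fintype n] [DecidableEq n]
    (ρ σ : Matrix n n ℂ) : ℝ :=
  ((msqrt (msqrt ρ * σ * msqrt ρ)).trace).re

/-- The hiding state `ρ_f` of a function `f : X → Y`:
`(ρ_f)_{x,x'} = 1/|X|` if `f x = f x'` and `0` otherwise. -/
noncomputable def hidingState {X Y : Type*} [Fintype X] [DecidableEq Y]
    (f : X → Y) : Matrix X X ℂ :=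
  Matrix.of fun x x' => if f x = f x' then (1 : ℂ) / (Fintype.card X) else 0

/-- `tr(ρ_f ρ_{f'}) = (1/|X|²) Σ_{(y,y')} |L_f(y) ∩ L_{f'}(y')|²`. -/
theorem stmt_2 {X Y : Type*} [Fintype X] [Fintype Y] [DecidableEq X] [DecidableEq Y]
    [Nonempty X] [Nonempty Y] (f f' : X → Y) :
    (hidingState f * hidingState f').trace =
      (1 / (Fintype.card X : ℂ) ^ 2) * ∑ yy : Y × Y,
        ((Finset.univ.filter (fun x : X => f x = yy.1 ∧ f' x = yy.2)).card : ℂ) ^ 2 := by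
  classical
  set c : ℂ := (Fintype.card X : ℂ) with hc
  have hrhs : ∑ yy : Y × Y,
      ((Finset.univ.filter (fun x : X => f x = yy.1 ∧ f' x = yy.2)).card : ℂ) ^ 2
      = ∑ x : X, ∑ x' : X,
        (if f x = f x' ∧ f' x = f' x' then (1 : ℂ) else 0) := by
    have h1 : ∀ yy : Y × Y,
        ((Finset.univ.filter (fun x : X => f x = yy.1 ∧ f' x = yy.2)).card : ℂ)
        = ∑ x : X, (if f x = yy.1 ∧ f' x = yy.2 then (1 : ℂ) else 0) := by
      intro yy
      rw [Finset.card_filter]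
      push_cast
      rfl
    calc ∑ yy : Y × Y, ((Finset.univ.filter (fun x : X => f x = yy.1 ∧ f' x = yy.2)).card : ℂ) ^ 2
        = ∑ yy : Y × Y, ∑ x : X, ∑ x' : X,
            (if f x = yy.1 ∧ f' x = yy.2 then (1 : ℂ) else 0) *
            (if f x' = yy.1 ∧ f' x' = yy.2 then (1 : ℂ) else 0) := by
          refine Finset.sum_congr rfl fun yy _ => ?_
          rw [h1, sq, Finset.sum_mul_sum]
      _ = ∑ x : X, ∑ x' : X, ∑ yy : Y × Y,
            (if f x = yy.1 ∧ f' x = yy.2 then (1 : ℂ) else 0) *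
            (if f x' = yy.1 ∧ f' x' = yy.2 then (1 : ℂ) else 0) := by
          rw [Finset.sum_comm]
          refine Finset.sum_congr rfl fun x _ => Finset.sum_comm
      _ = ∑ x : X, ∑ x' : X, (if f x = f x' ∧ f' x = f' x' then (1 : ℂ) else 0) := by
          refine Finset.sum_congr rfl fun x _ => Finset.sum_congr rfl fun x' _ => ?_
          rw [Fintype.sum_prod_type]
          rw [Finset.sum_eq_single (f x), Finset.sum_eq_single (f' x)]
          · by_cases h1 : f x = f x' <;> by_cases h2 : f' x = f' x' <;>
              simp [h1, h2, eq_comm]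
          · intro b _ hb; simp [hb, Ne.symm hb]
          · simp
          · intro b _ hb
            apply Finset.sum_eq_zero
            intro y' _
            simp [hb, Ne.symm hb]
          · simp
  rw [Matrix.trace, hrhs, Finset.mul_sum]
  simp only [Matrix.diag, Matrix.mul_apply, hidingState, Matrix.of_apply]
  refine Finset.sum_congr rfl fun x _ => ?_
  rw [Finset.mul_sum]
  refine Finset.sum_congr rfl fun x' _ => ?_
  have hc0 : c ≠ 0 := by
    simp only [hc]; exact Nat.cast_ne_zero.mpr (Fintype.card_ne_zero (α := X))
  by_cases h1 : f x = f x' <;> by_cases h2 : f' x = f' x' <;>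
    simp [h1, h2, eq_comm, sq, hc0, hc]
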